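/- The minimum operation on norms is jointly 1-Lipschitz for d_1: for norms χ_1, χ_2, χ'_1, χ'_2 on a finite-dimensional vector space V, one has d_1(χ_1∧χ_2, χ'_1∧χ'_2) ≤ d_1(χ_1,χ'_1) + d_1(χ_2,χ'_2). -/

import Mathlib

open scoped ENNReal

noncomputable section
attribute [local instance] Classical.propDecidable

/-- An additive non-Archimedean norm on a vector space over a trivially valued field:
`χ : V → ℝ ∪ {+∞}` with `χ v = +∞` iff `v = 0`, invariance under nonzero scalars, and
the ultrametric inequality `χ(v+w) ≥ min (χ v) (χ w)`. -/
structure NAnorm (k V : Type*) [Field k] [AddCommGroup V] [Module k V] where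
  toFun : V → EReal
  ne_bot : ∀ v, toFun v ≠ ⊥
  top_iff : ∀ v, toFun v = ⊤ ↔ v = 0
  smul_eq : ∀ (a : k) (v : V), a ≠ 0 → toFun (a • v) = toFun v
  ultra : ∀ v w, min (toFun v) (toFun w) ≤ toFun (v + w)

namespace NAnorm

variable {k V : Type*} [Field k] [AddCommGroup V] [Module k V]

/-- A basis is `χ`-orthogonal if the norm of any linear combination is the minimum of the
norms of the basis vectors appearing with a nonzero coefficient. -/
def IsOrthogonal {N : ℕ} (χ : NAnorm k V) (b : Module.Basis (Fin N) k V) : Prop :=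
  ∀ a : Fin N → k, χ.toFun (∑ i, a i • b i) = ⨅ i ∈ {i | a i ≠ 0}, χ.toFun (b i)

/-- The real value of the norm (finite on nonzero vectors). -/
noncomputable def val (χ : NAnorm k V) (v : V) : ℝ := (χ.toFun v).toReal

/-- The pointwise minimum of two norms. -/
noncomputable def inf (χ χ' : NAnorm k V) : NAnorm k V where
  toFun v := min (χ.toFun v) (χ'.toFun v)
  ne_bot v h := by
    rcases min_cases (χ.toFun v) (χ'.toFun v) with ⟨h1, _⟩ | ⟨h1, _⟩
    · exact χ.ne_bot v (by rw [← h1]; exact h)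
    · exact χ'.ne_bot v (by rw [← h1]; exact h)
  top_iff v := by
    constructor
    · intro h
      have h1 : (⊤ : EReal) ≤ χ.toFun v := by rw [← h]; exact min_le_left _ _
      exact (χ.top_iff v).1 (le_antisymm le_top h1)
    · intro h
      show min (χ.toFun v) (χ'.toFun v) = ⊤
      rw [(χ.top_iff v).2 h, (χ'.top_iff v).2 h, min_self]
  smul_eq a v ha := by
    show min (χ.toFun (a • v)) (χ'.toFun (a • v)) = min (χ.toFun v) (χ'.toFun v)
    rw [χ.smul_eq a v ha, χ'.smul_eq a v ha]
  ultra v w := by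
    refine le_min ?_ ?_
    · exact le_trans (min_le_min (min_le_left _ _) (min_le_left _ _)) (χ.ultra v w)
    · exact le_trans (min_le_min (min_le_right _ _) (min_le_right _ _)) (χ'.ultra v w)

/-- The Goldman–Iwahori distance `d_∞(χ,χ') = sup_{v ≠ 0} |χ(v) - χ'(v)|`. -/
noncomputable def dInfty (χ χ' : NAnorm k V) : ℝ≥0∞ :=
  ⨆ v : {v : V // v ≠ 0}, ENNReal.ofReal |χ.val v.1 - χ'.val v.1|

/-- The distance `d_p(χ,χ')`, computed from the relative spectrum of `χ,χ'` in a joint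
orthogonal basis. -/
noncomputable def dp (p : ℝ) (χ χ' : NAnorm k V) : ℝ :=
  if h : ∃ b : Module.Basis (Fin (Module.finrank k V)) k V, χ.IsOrthogonal b ∧ χ'.IsOrthogonal b then
    ((Module.finrank k V : ℝ)⁻¹ *
      ∑ j, |χ.val (h.choose j) - χ'.val (h.choose j)| ^ p) ^ (1 / p)
  else 0

/-- The volume of a norm: the mean of its spectrum, computed in an orthogonal basis. -/
noncomputable def vol (χ : NAnorm k V) : ℝ :=
  if h : ∃ b : Module.Basis (Fin (Module.finrank k V)) k V, χ.IsOrthogonal b then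
    (Module.finrank k V : ℝ)⁻¹ * ∑ j, χ.val (h.choose j)
  else 0

-- Part 0: basic facts
theorem toFun_zero (χ : NAnorm k V) : χ.toFun 0 = ⊤ := (χ.top_iff 0).2 rfl

theorem toFun_neg (χ : NAnorm k V) (v : V) : χ.toFun (-v) = χ.toFun v := by
  have := χ.smul_eq (-1 : k) v (by norm_num)
  rwa [neg_one_smul] at this

theorem toFun_add_eq_of_lt (χ : NAnorm k V) {v w : V} (h : χ.toFun v < χ.toFun w) :
    χ.toFun (v + w) = χ.toFun v := by
  refine le_antisymm ?_ (le_trans (by simp [le_of_lt h]) (χ.ultra v w))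
  by_contra hc
  push_neg at hc
  have h2 : χ.toFun v < χ.toFun (v + w) := hc
  have h3 := χ.ultra (v + w) (-w)
  rw [toFun_neg, add_neg_cancel_right] at h3
  rcases min_le_iff.1 h3 with h4 | h4
  · exact absurd h4 (not_le.2 h2)
  · exact absurd h4 (not_le.2 h)

/-- The filtration subspace `{v | t ≤ χ v}`. -/
def filt (χ : NAnorm k V) (t : EReal) : Submodule k V where
  carrier := {v | t ≤ χ.toFun v}
  add_mem' := by
    intro v w hv hw
    exact le_trans (le_min hv hw) (χ.ultra v w)
  zero_mem' := by simp [toFun_zero]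
  smul_mem' := by
    intro a v hv
    by_cases ha : a = 0
    · subst ha; simpa [toFun_zero] using (le_top : t ≤ (⊤:EReal))
    · show t ≤ χ.toFun (a • v)
      rwa [χ.smul_eq a v ha]

@[simp] theorem mem_filt (χ : NAnorm k V) (t : EReal) (v : V) :
    v ∈ χ.filt t ↔ t ≤ χ.toFun v := Iff.rfl

/-- Restriction of a norm to a submodule. -/
def restrict (χ : NAnorm k V) (W : Submodule k V) : NAnorm k W where
  toFun w := χ.toFun w
  ne_bot w := χ.ne_bot w
  top_iff w := by rw [χ.top_iff]; exact_mod_cast Submodule.coe_eq_zero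
  smul_eq a w ha := by
    show χ.toFun ((a • w : W) : V) = _
    rw [Submodule.coe_smul, χ.smul_eq a w ha]
  ultra v w := by
    show _ ≤ χ.toFun ((v + w : W) : V)
    rw [Submodule.coe_add]; exact χ.ultra v w

theorem toFun_ne_top (χ : NAnorm k V) {v : V} (hv : v ≠ 0) : χ.toFun v ≠ ⊤ :=
  fun h => hv ((χ.top_iff v).1 h)

theorem toFun_eq_coe_val (χ : NAnorm k V) {v : V} (hv : v ≠ 0) :
    χ.toFun v = (χ.val v : EReal) :=
  (EReal.coe_toReal (χ.toFun_ne_top hv) (χ.ne_bot v)).symm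

theorem inf_toFun (χ χ' : NAnorm k V) (v : V) :
    (χ.inf χ').toFun v = min (χ.toFun v) (χ'.toFun v) := rfl

theorem inf_val (χ χ' : NAnorm k V) {v : V} (hv : v ≠ 0) :
    (χ.inf χ').val v = min (χ.val v) (χ'.val v) := by
  have hmono : Monotone (fun x : ℝ => (x : EReal)) := fun a b h => EReal.coe_le_coe_iff.2 h
  have : ((χ.inf χ').toFun v) = ((min (χ.val v) (χ'.val v) : ℝ) : EReal) := by
    rw [inf_toFun, χ.toFun_eq_coe_val hv, χ'.toFun_eq_coe_val hv, hmono.map_min]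
  rw [val, this, EReal.toReal_coe]
-- Part A: existence of joint orthogonal bases
section PartA
variable [FiniteDimensional k V]

theorem exists_max (χ : NAnorm k V) (hV : ∃ v : V, v ≠ 0) :
    ∃ v : V, v ≠ 0 ∧ ∀ u : V, u ≠ 0 → χ.toFun u ≤ χ.toFun v := by
  classical
  set S : Set ℕ := (fun v => Module.finrank k (χ.filt (χ.toFun v))) '' {v : V | v ≠ 0} with hS
  obtain ⟨v1, hv1⟩ := hV
  have hne : S.Nonempty := ⟨_, ⟨v1, hv1, rfl⟩⟩
  obtain ⟨v0, hv0, hrank⟩ := Nat.sInf_mem hne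
  refine ⟨v0, hv0, fun u hu => ?_⟩
  by_contra hc
  push_neg at hc
  have hle : χ.filt (χ.toFun u) ≤ χ.filt (χ.toFun v0) := by
    intro x hx
    rw [mem_filt] at hx ⊢
    exact le_trans (le_of_lt hc) hx
  have hlt : χ.filt (χ.toFun u) < χ.filt (χ.toFun v0) := by
    refine lt_of_le_of_ne hle fun he => ?_
    have hmem : v0 ∈ χ.filt (χ.toFun u) := by rw [he, mem_filt]
    exact absurd ((mem_filt χ _ v0).1 hmem) (not_le.2 hc)
  have hltrank := Submodule.finrank_lt_finrank_of_lt hlt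
  have h1 : Module.finrank k (χ.filt (χ.toFun v0)) = sInf S := hrank
  rw [h1] at hltrank
  have hmemS : Module.finrank k (χ.filt (χ.toFun u)) ∈ S := ⟨u, hu, rfl⟩
  exact absurd (Nat.sInf_le hmemS) (not_le.2 hltrank)

theorem exists_compl_hyperplane (G : Submodule k V) (v : V) (hv : v ∉ G) :
    ∃ W : Submodule k V, G ≤ W ∧ IsCompl (Submodule.span k {v}) W := by
  obtain ⟨C, hC⟩ := Submodule.exists_isCompl (G ⊔ Submodule.span k {v})
  refine ⟨G ⊔ C, le_sup_left, ?_, ?_⟩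
  · -- disjoint
    rw [Submodule.disjoint_def]
    intro x hx hx'
    obtain ⟨a, rfl⟩ := Submodule.mem_span_singleton.1 hx
    obtain ⟨g, hg, c, hc, hgc⟩ := Submodule.mem_sup.1 hx'
    have hcU : c ∈ G ⊔ Submodule.span k {v} := by
      have : c = a • v - g := by rw [← hgc]; abel
      rw [this]
      exact Submodule.sub_mem _ (Submodule.mem_sup_right (Submodule.smul_mem _ a
        (Submodule.mem_span_singleton_self v))) (Submodule.mem_sup_left hg)
    have hc0 : c = 0 := by
      have := hC.disjoint
      rw [Submodule.disjoint_def] at this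
      exact this c hcU hc
    rw [hc0, add_zero] at hgc
    by_cases ha : a = 0
    · rw [ha, zero_smul]
    · exfalso
      apply hv
      have : v = a⁻¹ • (a • v) := by rw [smul_smul, inv_mul_cancel₀ ha, one_smul]
      rw [this, ← hgc]
      exact Submodule.smul_mem _ _ hg
  · -- codisjoint
    rw [codisjoint_iff, ← sup_assoc, sup_comm (Submodule.span k {v}) G]
    exact codisjoint_iff.1 hC.codisjoint

end PartA
/-- The strict filtration `{u | t < χ u}`. -/
def filtGT (χ : NAnorm k V) (t : EReal) (ht : t ≠ ⊤) : Submodule k V where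
  carrier := {u | t < χ.toFun u}
  add_mem' := by
    intro v w hv hw
    exact lt_of_lt_of_le (lt_min hv hw) (χ.ultra v w)
  zero_mem' := by
    show t < χ.toFun 0
    rw [toFun_zero]
    exact lt_top_iff_ne_top.2 ht
  smul_mem' := by
    intro a v hv
    by_cases ha : a = 0
    · subst ha
      show t < χ.toFun ((0:k) • v)
      rw [zero_smul, toFun_zero]
      exact lt_top_iff_ne_top.2 ht
    · show t < χ.toFun (a • v)
      rwa [χ.smul_eq a v ha]

@[simp] theorem mem_filtGT (χ : NAnorm k V) (t : EReal) (ht : t ≠ ⊤) (v : V) :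
    v ∈ χ.filtGT t ht ↔ t < χ.toFun v := Iff.rfl

theorem split_lemma (χ : NAnorm k V) {v : V} (hv : v ≠ 0) {W : Submodule k V}
    (hcompl : IsCompl (Submodule.span k {v}) W)
    (hGW : χ.filtGT (χ.toFun v) (χ.toFun_ne_top hv) ≤ W) :
    ∀ (a : k), ∀ w ∈ W, χ.toFun (a • v + w) = min (χ.toFun (a • v)) (χ.toFun w) := by
  intro a w hw
  by_cases ha : a = 0
  · rw [ha, zero_smul, zero_add, toFun_zero, min_eq_right le_top]
  have hs : χ.toFun (a • v) = χ.toFun v := χ.smul_eq a v ha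
  rcases lt_or_ge (χ.toFun w) (χ.toFun v) with hlt | hge
  · rw [add_comm, χ.toFun_add_eq_of_lt (by rw [hs]; exact hlt), hs,
      min_eq_right (le_of_lt hlt)]
  · rw [hs, min_eq_left hge]
    refine le_antisymm ?_ ?_
    · by_contra hc
      push_neg at hc
      have hmem : a • v + w ∈ χ.filtGT (χ.toFun v) (χ.toFun_ne_top hv) := hc
      have hmemW : a • v + w ∈ W := hGW hmem
      have havW : a • v ∈ W := by
        have : a • v = (a • v + w) - w := by abel
        rw [this]
        exact Submodule.sub_mem _ hmemW hw
      have : a • v = 0 :=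
        Submodule.disjoint_def.1 hcompl.disjoint (a • v)
          (Submodule.smul_mem _ a (Submodule.mem_span_singleton_self v)) havW
      rcases smul_eq_zero.1 this with h | h
      · exact ha h
      · exact hv h
    · calc χ.toFun v = min (χ.toFun (a • v)) (χ.toFun w) := by rw [hs, min_eq_left hge]
        _ ≤ χ.toFun (a • v + w) := χ.ultra _ _

/-- Orthogonality of a general finite family. -/
def OrthoFam {ι : Type*} [Fintype ι] (χ : NAnorm k V) (b : ι → V) : Prop :=
  ∀ a : ι → k, χ.toFun (∑ i, a i • b i) = ⨅ i ∈ {i | a i ≠ 0}, χ.toFun (b i)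

theorem iInf_fin_succ {α : Type*} [CompleteLattice α] {n : ℕ} (f : Fin (n + 1) → α) :
    ⨅ i, f i = f 0 ⊓ ⨅ j : Fin n, f j.succ := by
  refine le_antisymm (le_inf (iInf_le _ 0) (le_iInf fun j => iInf_le _ j.succ))
    (le_iInf fun i => ?_)
  refine Fin.cases inf_le_left (fun j => le_trans inf_le_right (iInf_le _ j)) i

theorem orthoFam_extend {n : ℕ} (χ : NAnorm k V) {W : Submodule k V} {v : V}
    (hsplit : ∀ (a : k), ∀ w ∈ W, χ.toFun (a • v + w) = min (χ.toFun (a • v)) (χ.toFun w))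
    (hv : v ≠ 0)
    (bW : Fin n → W) (hbW : OrthoFam (χ.restrict W) bW) :
    OrthoFam χ (Fin.cons v (fun j => ((bW j : V)))) := by
  intro a
  set c : Fin (n + 1) → V := Fin.cons v (fun j => ((bW j : V))) with hc
  have hsum : ∑ i, a i • c i = a 0 • v + ∑ j : Fin n, a j.succ • (bW j : V) := by
    rw [Fin.sum_univ_succ]
    simp [hc]
  set w' : W := ∑ j : Fin n, (a j.succ) • bW j with hw'
  have hw'coe : (w' : V) = ∑ j : Fin n, a j.succ • (bW j : V) := by
    simp [hw']
  have h1 : χ.toFun (∑ i, a i • c i) = min (χ.toFun (a 0 • v)) (χ.toFun (w' : V)) := by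
    rw [hsum, ← hw'coe]
    exact hsplit (a 0) w' w'.2
  have h2 : χ.toFun (w' : V) = ⨅ j ∈ {j : Fin n | a j.succ ≠ 0}, χ.toFun (bW j : V) :=
    hbW (fun j => a j.succ)
  have h3 : χ.toFun (a 0 • v) = ⨅ _ : a 0 ≠ 0, χ.toFun v := by
    by_cases h0 : a 0 = 0
    · rw [h0, zero_smul, toFun_zero, iInf_neg (by simp [h0])]
    · rw [χ.smul_eq _ _ h0, iInf_pos h0]
  rw [h1, h2, h3]
  have hsplit2 : ⨅ i ∈ {i | a i ≠ 0}, χ.toFun (c i)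
      = (⨅ _ : a 0 ≠ 0, χ.toFun (c 0)) ⊓ ⨅ j ∈ {j : Fin n | a j.succ ≠ 0}, χ.toFun (c j.succ) := by
    exact iInf_fin_succ (fun i => ⨅ _ : a i ≠ 0, χ.toFun (c i))
  rw [hsplit2]
  rfl
theorem exists_joint_fam (n : ℕ) :
    ∀ (V' : Type v) [AddCommGroup V'] [Module k V'] [FiniteDimensional k V'],
      Module.finrank k V' = n → ∀ (χ χ' : NAnorm k V'),
      ∃ b : Module.Basis (Fin n) k V', OrthoFam χ ⇑b ∧ OrthoFam χ' ⇑b := by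
  induction n with
  | zero =>
    intro V' _ _ _ hn χ χ'
    have : Subsingleton V' := Module.finrank_zero_iff.1 hn
    refine ⟨Module.Basis.empty V', ?_, ?_⟩ <;>
    · intro a
      rw [Subsingleton.elim (∑ i, a i • (Module.Basis.empty V' : Module.Basis (Fin 0) k V') i) 0, toFun_zero]
      exact (iInf_eq_top.2 fun i => i.elim0).symm
  | succ n ih =>
    intro V' _ _ _ hn χ χ'
    have hnt : Nontrivial V' := Module.finrank_pos_iff.1 (by rw [hn]; exact Nat.succ_pos n)
    obtain ⟨v, hv, hmax⟩ := χ.exists_max (exists_ne 0)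
    have hvG : v ∉ χ'.filtGT (χ'.toFun v) (χ'.toFun_ne_top hv) := by rw [mem_filtGT]; exact lt_irrefl _
    obtain ⟨W, hGW, hcompl⟩ := exists_compl_hyperplane _ v hvG
    have hrankW : Module.finrank k W = n := by
      have h1 := Submodule.finrank_add_eq_of_isCompl hcompl
      rw [finrank_span_singleton hv, hn] at h1
      omega
    obtain ⟨bW, hbW1, hbW2⟩ := ih W hrankW (χ.restrict W) (χ'.restrict W)
    have hli : ∀ (c : k), ∀ x ∈ W, c • v + x = 0 → c = 0 := by
      intro c x hx hcx
      by_contra hc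
      have hmem : c • v ∈ W := by
        have : c • v = -x := by rw [eq_neg_iff_add_eq_zero]; exact hcx
        rw [this]; exact Submodule.neg_mem _ hx
      have : c • v = 0 := Submodule.disjoint_def.1 hcompl.disjoint (c • v)
        (Submodule.smul_mem _ c (Submodule.mem_span_singleton_self v)) hmem
      rcases smul_eq_zero.1 this with h | h
      · exact hc h
      · exact hv h
    have hsp : ∀ z : V', ∃ c : k, z + c • v ∈ W := by
      intro z
      have hz : z ∈ Submodule.span k {v} ⊔ W := by
        rw [codisjoint_iff.1 hcompl.codisjoint]; trivial
      obtain ⟨s, hs, w, hw, hsw⟩ := Submodule.mem_sup.1 hz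
      obtain ⟨a, rfl⟩ := Submodule.mem_span_singleton.1 hs
      exact ⟨-a, by rw [← hsw, neg_smul]; simpa using hw⟩
    set b := Module.Basis.mkFinCons v bW hli hsp with hb
    have hcoe : ⇑b = Fin.cons v (fun j => ((bW j : V'))) := by
      rw [hb, Module.Basis.coe_mkFinCons]; rfl
    have horthχ : OrthoFam χ ⇑b := by
      rw [hcoe]
      refine orthoFam_extend χ (χ.split_lemma hv hcompl ?_) hv bW hbW1
      intro u hu
      by_cases hu0 : u = 0
      · rw [hu0]; exact Submodule.zero_mem _
      · exact absurd (hmax u hu0) (not_le.2 hu)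
    have horthχ' : OrthoFam χ' ⇑b := by
      rw [hcoe]
      exact orthoFam_extend χ' (χ'.split_lemma hv hcompl hGW) hv bW hbW2
    exact ⟨b, horthχ, horthχ'⟩

theorem exists_joint [FiniteDimensional k V] (χ χ' : NAnorm k V) :
    ∃ b : Module.Basis (Fin (Module.finrank k V)) k V, χ.IsOrthogonal b ∧ χ'.IsOrthogonal b := by
  obtain ⟨b, h1, h2⟩ := exists_joint_fam (Module.finrank k V) V rfl χ χ'
  exact ⟨b, h1, h2⟩
-- Part B: multiset counting lemmas
theorem multiset_exists_max {s : Multiset ℝ} (hs : s ≠ 0) : ∃ a ∈ s, ∀ x ∈ s, x ≤ a := by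
  induction s using Multiset.induction with
  | empty => exact absurd rfl hs
  | cons a t ih =>
    by_cases ht : t = 0
    · subst ht
      exact ⟨a, Multiset.mem_cons_self a 0, fun x hx => by
        rw [Multiset.mem_cons] at hx
        rcases hx with rfl | hx
        · exact le_refl _
        · exact absurd hx (by simp)⟩
    · obtain ⟨m, hm, hmax⟩ := ih ht
      refine ⟨max a m, ?_, ?_⟩
      · rcases max_cases a m with ⟨h1, _⟩ | ⟨h1, _⟩
        · rw [h1]; exact Multiset.mem_cons_self a t
        · rw [h1]; exact Multiset.mem_cons_of_mem hm
      · intro x hx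
        rcases Multiset.mem_cons.1 hx with rfl | hx
        · exact le_max_left _ _
        · exact le_trans (hmax x hx) (le_max_right _ _)

theorem multiset_sum_le_of_counts :
    ∀ (n : ℕ) (s t : Multiset ℝ), Multiset.card s = n → Multiset.card t = n →
    (∀ r : ℝ, Multiset.card (s.filter (fun x => r ≤ x)) ≤
      Multiset.card (t.filter (fun x => r ≤ x))) → s.sum ≤ t.sum := by
  intro n
  induction n with
  | zero =>
    intro s t hs ht _
    rw [Multiset.card_eq_zero.1 hs, Multiset.card_eq_zero.1 ht]
  | succ n ih =>
    intro s t hs ht hcount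
    have hsne : s ≠ 0 := by
      intro h; rw [h] at hs; simp at hs
    have htne : t ≠ 0 := by
      intro h; rw [h] at ht; simp at ht
    obtain ⟨m, hm, hmmax⟩ := multiset_exists_max hsne
    obtain ⟨a, ha, hamax⟩ := multiset_exists_max htne
    have hma : m ≤ a := by
      have h1 : 0 < Multiset.card (s.filter (fun x => m ≤ x)) := by
        rw [Multiset.card_pos_iff_exists_mem]
        exact ⟨m, Multiset.mem_filter.2 ⟨hm, le_refl m⟩⟩
      have h2 := lt_of_lt_of_le h1 (hcount m)
      rw [Multiset.card_pos_iff_exists_mem] at h2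
      obtain ⟨x, hx⟩ := h2
      obtain ⟨hxt, hmx⟩ := Multiset.mem_filter.1 hx
      exact le_trans hmx (hamax x hxt)
    set s' := s.erase m with hs'
    set t' := t.erase a with ht'
    have hscons : s = m ::ₘ s' := (Multiset.cons_erase hm).symm
    have htcons : t = a ::ₘ t' := (Multiset.cons_erase ha).symm
    have hcard_s' : Multiset.card s' = n := by
      rw [hscons, Multiset.card_cons] at hs; omega
    have hcard_t' : Multiset.card t' = n := by
      rw [htcons, Multiset.card_cons] at ht; omega
    have hcount' : ∀ r : ℝ, Multiset.card (s'.filter (fun x => r ≤ x)) ≤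
        Multiset.card (t'.filter (fun x => r ≤ x)) := by
      intro r
      by_cases hr : r ≤ m
      · have h1 := hcount r
        rw [hscons, htcons, Multiset.filter_cons, Multiset.filter_cons] at h1
        rw [if_pos hr, if_pos (le_trans hr hma)] at h1
        simpa using h1
      · have : Multiset.card (s'.filter (fun x => r ≤ x)) = 0 := by
          rw [Multiset.card_eq_zero, Multiset.filter_eq_nil]
          intro x hx
          have hxs : x ∈ s := by rw [hscons]; exact Multiset.mem_cons_of_mem hx
          intro hrx
          exact hr (le_trans hrx (hmmax x hxs))
        rw [this]
        exact Nat.zero_le _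
    have hsum := ih s' t' hcard_s' hcard_t' hcount'
    rw [hscons, htcons, Multiset.sum_cons, Multiset.sum_cons]
    exact add_le_add hma hsum

theorem multiset_sum_eq_of_counts (s t : Multiset ℝ) (hcard : Multiset.card s = Multiset.card t)
    (hcount : ∀ r : ℝ, Multiset.card (s.filter (fun x => r ≤ x)) =
      Multiset.card (t.filter (fun x => r ≤ x))) : s.sum = t.sum :=
  le_antisymm
    (multiset_sum_le_of_counts _ s t rfl hcard.symm fun r => le_of_eq (hcount r))
    (multiset_sum_le_of_counts _ t s rfl hcard fun r => le_of_eq (hcount r).symm)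
-- Part B2: filtration dimensions via orthogonal bases
section B2
variable [FiniteDimensional k V]

theorem toFun_eq_iInf_repr {N : ℕ} (χ : NAnorm k V) (b : Module.Basis (Fin N) k V)
    (hb : χ.IsOrthogonal b) (v : V) :
    χ.toFun v = ⨅ i ∈ {i | b.repr v i ≠ 0}, χ.toFun (b i) := by
  conv_lhs => rw [← b.sum_repr v]
  exact hb (fun i => b.repr v i)

theorem filt_eq_span {N : ℕ} (χ : NAnorm k V) (b : Module.Basis (Fin N) k V)
    (hb : χ.IsOrthogonal b) (t : EReal) :
    χ.filt t = Submodule.span k (⇑b '' {i | t ≤ χ.toFun (b i)}) := by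
  ext v
  rw [mem_filt, Module.Basis.mem_span_image, χ.toFun_eq_iInf_repr b hb v]
  constructor
  · intro hv i hi
    rw [Finset.mem_coe, Finsupp.mem_support_iff] at hi
    exact le_trans hv (iInf₂_le i hi)
  · intro hv
    refine le_iInf₂ fun i hi => ?_
    exact hv (by rw [Finset.mem_coe, Finsupp.mem_support_iff]; exact hi)

theorem finrank_filt {N : ℕ} (χ : NAnorm k V) (b : Module.Basis (Fin N) k V)
    (hb : χ.IsOrthogonal b) (t : EReal) :
    Module.finrank k (χ.filt t) =
      (Finset.univ.filter (fun i => t ≤ χ.toFun (b i))).card := by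
  classical
  set S : Set (Fin N) := {i | t ≤ χ.toFun (b i)} with hS
  rw [χ.filt_eq_span b hb t]
  have hli : LinearIndependent k (fun i : S => b i) :=
    b.linearIndependent.comp (Subtype.val : S → Fin N) Subtype.val_injective
  have hrange : Set.range (fun i : S => b i) = ⇑b '' S := by
    rw [← Set.image_eq_range]
  have := finrank_span_eq_card hli
  rw [hrange] at this
  rw [this]
  rw [← Fintype.card_coe]
  apply Fintype.card_congr
  exact Equiv.subtypeEquivRight (fun i => by simp [hS])

end B2
-- Part B3: spectra as multisets
section B3
variable [FiniteDimensional k V]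

/-- The spectrum of `χ` in the basis `b`, as a multiset of reals. -/
def specMul {N : ℕ} (χ : NAnorm k V) (b : Module.Basis (Fin N) k V) : Multiset ℝ :=
  Multiset.map (fun i => χ.val (b i)) Finset.univ.val

theorem specMul_card {N : ℕ} (χ : NAnorm k V) (b : Module.Basis (Fin N) k V) :
    Multiset.card (χ.specMul b) = N := by
  rw [specMul, Multiset.card_map]
  simp

theorem specMul_sum {N : ℕ} (χ : NAnorm k V) (b : Module.Basis (Fin N) k V) :
    (χ.specMul b).sum = ∑ i, χ.val (b i) := by
  rfl

theorem card_filter_eq_of_iff {α : Type*} {p q : α → Prop} {hp : DecidablePred p}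
    {hq : DecidablePred q} (s : Multiset α) (h : ∀ x ∈ s, p x ↔ q x) :
    Multiset.card (@Multiset.filter α p hp s) = Multiset.card (@Multiset.filter α q hq s) := by
  induction s using Multiset.induction with
  | empty => rfl
  | cons a s ih =>
    rw [Multiset.filter_cons, Multiset.filter_cons, Multiset.card_add, Multiset.card_add,
      ih (fun x hx => h x (Multiset.mem_cons_of_mem hx))]
    have ha := h a (Multiset.mem_cons_self a s)
    by_cases hpa : p a
    · rw [if_pos hpa, if_pos (ha.1 hpa)]
    · rw [if_neg hpa, if_neg (fun hqa => hpa (ha.2 hqa))]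

theorem specMul_count {N : ℕ} (χ : NAnorm k V) (b : Module.Basis (Fin N) k V)
    (hb : χ.IsOrthogonal b) (r : ℝ) :
    Multiset.card ((χ.specMul b).filter (fun x => r ≤ x)) =
      Module.finrank k (χ.filt (r : EReal)) := by
  classical
  rw [χ.finrank_filt b hb, specMul, Multiset.filter_map, Multiset.card_map,
    Finset.card_def, Finset.filter_val]
  refine card_filter_eq_of_iff _ fun i _ => ?_
  rw [Function.comp_apply, χ.toFun_eq_coe_val (b.ne_zero i), EReal.coe_le_coe_iff]

end B3
-- Part C: assembly
section C
variable [FiniteDimensional k V]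

theorem isOrthogonal_inf {N : ℕ} {χ χ' : NAnorm k V} {b : Module.Basis (Fin N) k V}
    (hb : χ.IsOrthogonal b) (hb' : χ'.IsOrthogonal b) : (χ.inf χ').IsOrthogonal b := by
  intro a
  rw [inf_toFun, hb a, hb' a]
  simp only [inf_toFun]
  rw [← iInf_inf_eq]
  congr 1
  funext i
  rw [← iInf_inf_eq]

theorem filt_inf (χ χ' : NAnorm k V) (t : EReal) :
    (χ.inf χ').filt t = χ.filt t ⊓ χ'.filt t := by
  ext v
  rw [Submodule.mem_inf, mem_filt, mem_filt, mem_filt, inf_toFun, le_min_iff]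

theorem specMul_sum_eq {N : ℕ} (χ : NAnorm k V) (b c : Module.Basis (Fin N) k V)
    (hb : χ.IsOrthogonal b) (hc : χ.IsOrthogonal c) :
    (χ.specMul b).sum = (χ.specMul c).sum := by
  apply multiset_sum_eq_of_counts
  · rw [specMul_card, specMul_card]
  · intro r
    rw [χ.specMul_count b hb r, χ.specMul_count c hc r]

theorem finrank_inf_ineq (X T Y : Submodule k V) :
    Module.finrank k ↥(X ⊓ T) + Module.finrank k ↥(X ⊓ Y) ≤
      Module.finrank k ↥X + Module.finrank k ↥(X ⊓ T ⊓ Y) := by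
  have hmod := Submodule.finrank_sup_add_finrank_inf_eq (X ⊓ T) (X ⊓ Y)
  have hle : Module.finrank k ↥((X ⊓ T) ⊔ (X ⊓ Y)) ≤ Module.finrank k ↥X :=
    Submodule.finrank_mono (sup_le inf_le_left inf_le_left)
  have heq : (X ⊓ T) ⊓ (X ⊓ Y) = X ⊓ T ⊓ Y := by
    ext x
    simp only [Submodule.mem_inf]
    tauto
  rw [heq] at hmod
  omega

theorem four_subspace_ineq (A B A' B' : Submodule k V) :
    Module.finrank k ↥(A ⊓ B) + Module.finrank k ↥(A' ⊓ B') +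
      2 * Module.finrank k ↥(A ⊓ A') + 2 * Module.finrank k ↥(B ⊓ B') ≤
    Module.finrank k ↥A + Module.finrank k ↥A' + Module.finrank k ↥B +
      Module.finrank k ↥B' + 2 * Module.finrank k ↥((A ⊓ B) ⊓ (A' ⊓ B')) := by
  have h1 := finrank_inf_ineq (k := k) (V := V) A B A'
  have h2 := finrank_inf_ineq (k := k) (V := V) B (A ⊓ A') B'
  have h3 := finrank_inf_ineq (k := k) (V := V) A' B' A
  have h4 := finrank_inf_ineq (k := k) (V := V) B' (A' ⊓ A) B
  have e1 : A ⊓ B ⊓ A' = B ⊓ (A ⊓ A') := by ext x; simp only [Submodule.mem_inf]; tauto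
  have e2 : B ⊓ (A ⊓ A') ⊓ B' = (A ⊓ B) ⊓ (A' ⊓ B') := by
    ext x; simp only [Submodule.mem_inf]; tauto
  have e3 : A' ⊓ A = A ⊓ A' := by ext x; simp only [Submodule.mem_inf]; tauto
  have e4 : A' ⊓ B' ⊓ A = B' ⊓ (A' ⊓ A) := by ext x; simp only [Submodule.mem_inf]; tauto
  have e5 : B' ⊓ (A' ⊓ A) ⊓ B = (A ⊓ B) ⊓ (A' ⊓ B') := by
    ext x; simp only [Submodule.mem_inf]; tauto
  have e6 : B' ⊓ B = B ⊓ B' := by ext x; simp only [Submodule.mem_inf]; tauto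
  rw [e1] at h1
  rw [e2] at h2
  rw [e4, e3] at h3
  rw [e5, e3, e6] at h4
  omega

end C
section C2
variable [FiniteDimensional k V]

theorem abs_sub_eq_add_sub_two_min (x y : ℝ) : |x - y| = x + y - 2 * min x y := by
  rcases le_total x y with h | h
  · rw [min_eq_left h, abs_of_nonpos (by linarith)]; ring
  · rw [min_eq_right h, abs_of_nonneg (by linarith)]; ring

theorem dp_one_eq (χ χ' : NAnorm k V) (b : Module.Basis (Fin (Module.finrank k V)) k V)
    (hb : χ.IsOrthogonal b) (hb' : χ'.IsOrthogonal b) :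
    dp 1 χ χ' = (Module.finrank k V : ℝ)⁻¹ *
      ((χ.specMul b).sum + (χ'.specMul b).sum - 2 * ((χ.inf χ').specMul b).sum) := by
  have h0 : ∃ c : Module.Basis (Fin (Module.finrank k V)) k V,
      χ.IsOrthogonal c ∧ χ'.IsOrthogonal c := ⟨b, hb, hb'⟩
  rw [dp, dif_pos h0]
  obtain ⟨hc, hc'⟩ := h0.choose_spec
  set c := h0.choose with hcdef
  have hsum : ∑ j, |χ.val (c j) - χ'.val (c j)| ^ (1 : ℝ)
      = ∑ j, (χ.val (c j) + χ'.val (c j) - 2 * min (χ.val (c j)) (χ'.val (c j))) := by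
    refine Finset.sum_congr rfl fun j _ => ?_
    rw [Real.rpow_one, abs_sub_eq_add_sub_two_min]
  have hmin : ∀ j, min (χ.val (c j)) (χ'.val (c j)) = (χ.inf χ').val (c j) := by
    intro j
    rw [inf_val _ _ (c.ne_zero j)]
  have hS : ∑ j, |χ.val (c j) - χ'.val (c j)| ^ (1 : ℝ)
      = (χ.specMul c).sum + (χ'.specMul c).sum - 2 * ((χ.inf χ').specMul c).sum := by
    rw [hsum]
    simp only [hmin]
    rw [specMul_sum, specMul_sum, specMul_sum]
    rw [Finset.sum_sub_distrib, Finset.sum_add_distrib, Finset.mul_sum]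
  rw [hS]
  rw [specMul_sum_eq χ c b hc hb, specMul_sum_eq χ' c b hc' hb',
    specMul_sum_eq (χ.inf χ') c b (isOrthogonal_inf hc hc') (isOrthogonal_inf hb hb')]
  rw [one_div_one, Real.rpow_one]

end C2
end NAnorm

/-- The minimum operation on norms is jointly 1-Lipschitz for `d_1`:
`d_1(χ₁∧χ₂, χ₁'∧χ₂') ≤ d_1(χ₁,χ₁') + d_1(χ₂,χ₂')`. -/
theorem d1_inf_lipschitz {k V : Type*} [Field k] [AddCommGroup V] [Module k V]
    [FiniteDimensional k V] (χ₁ χ₂ χ₁' χ₂' : NAnorm k V) :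
    NAnorm.dp 1 (χ₁.inf χ₂) (χ₁'.inf χ₂') ≤
      NAnorm.dp 1 χ₁ χ₁' + NAnorm.dp 1 χ₂ χ₂' := by
  classical
  open NAnorm in
  set N := Module.finrank k V with hN
  set μ := χ₁.inf χ₂ with hμ
  set μ' := χ₁'.inf χ₂' with hμ'
  obtain ⟨b, hb1, hb2⟩ := NAnorm.exists_joint μ μ'
  obtain ⟨c1, hc11, hc12⟩ := NAnorm.exists_joint χ₁ χ₁'
  obtain ⟨c2, hc21, hc22⟩ := NAnorm.exists_joint χ₂ χ₂'
  rw [NAnorm.dp_one_eq μ μ' b hb1 hb2, NAnorm.dp_one_eq χ₁ χ₁' c1 hc11 hc12,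
    NAnorm.dp_one_eq χ₂ χ₂' c2 hc21 hc22]
  set S1 := (μ.specMul b).sum
  set S2 := (μ'.specMul b).sum
  set SZ := ((μ.inf μ').specMul b).sum
  set T1 := (χ₁.specMul c1).sum
  set T2 := (χ₁'.specMul c1).sum
  set Tν1 := ((χ₁.inf χ₁').specMul c1).sum
  set U1 := (χ₂.specMul c2).sum
  set U2 := (χ₂'.specMul c2).sum
  set Uν2 := ((χ₂.inf χ₂').specMul c2).sum
  have key : S1 + S2 + 2 * Tν1 + 2 * Uν2 ≤ T1 + T2 + U1 + U2 + 2 * SZ := by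
    have hle := NAnorm.multiset_sum_le_of_counts (6 * N)
      (μ.specMul b + μ'.specMul b + (χ₁.inf χ₁').specMul c1 + (χ₁.inf χ₁').specMul c1
        + (χ₂.inf χ₂').specMul c2 + (χ₂.inf χ₂').specMul c2)
      (χ₁.specMul c1 + χ₁'.specMul c1 + χ₂.specMul c2 + χ₂'.specMul c2
        + (μ.inf μ').specMul b + (μ.inf μ').specMul b)
      (by simp [NAnorm.specMul_card]; ring)
      (by simp [NAnorm.specMul_card]; ring)
      ?_
    · simp only [Multiset.sum_add] at hle
      linarith
    · intro r
      have hμorth := NAnorm.isOrthogonal_inf hb1 hb2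
      have hν1orth := NAnorm.isOrthogonal_inf hc11 hc12
      have hν2orth := NAnorm.isOrthogonal_inf hc21 hc22
      simp only [Multiset.filter_add, Multiset.card_add]
      rw [NAnorm.specMul_count _ b hb1 r, NAnorm.specMul_count _ b hb2 r,
        NAnorm.specMul_count _ c1 hν1orth r, NAnorm.specMul_count _ c2 hν2orth r,
        NAnorm.specMul_count _ c1 hc11 r, NAnorm.specMul_count _ c1 hc12 r,
        NAnorm.specMul_count _ c2 hc21 r, NAnorm.specMul_count _ c2 hc22 r,
        NAnorm.specMul_count _ b hμorth r]
      rw [hμ, hμ', NAnorm.filt_inf, NAnorm.filt_inf, NAnorm.filt_inf, NAnorm.filt_inf,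
        NAnorm.filt_inf, NAnorm.filt_inf, NAnorm.filt_inf]
      have h4 := NAnorm.four_subspace_ineq (χ₁.filt (r : EReal)) (χ₂.filt (r : EReal))
        (χ₁'.filt (r : EReal)) (χ₂'.filt (r : EReal))
      omega
  have hNinv : (0 : ℝ) ≤ (N : ℝ)⁻¹ := by positivity
  have := mul_le_mul_of_nonneg_left key hNinv
  nlinarith [this]
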